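/- Let (R,m,k) be an artinian local ring which is not injective as a module over itself (i.e., R is not Gorenstein), and let E be an injective envelope of k over R. Then m² = 0 if and only if R is nearly Gorenstein and m·Hom_R(E,R) = 0, where R is nearly Gorenstein means m ⊆ tr_R(E) := Σ_{f ∈ Hom_R(E,R)} Im(f). -/

import Mathlib

open IsLocalRing

universe u

/-- `(E, ι)` is an injective envelope of the residue field `k` over `R`: `E` is injective,
`ι : k → E` is injective, and the image of `ι` is essential in `E`. -/
def IsInjectiveEnvelopeOfResidueField (R : Type u) [CommRing R] [IsLocalRing R]
    (E : Type u) [AddCommGroup E] [Module R E] (ι : ResidueField R →ₗ[R] E) : Prop :=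
  Module.Injective R E ∧ Function.Injective ι ∧
    ∀ N : Submodule R E, N ≠ ⊥ → N ⊓ LinearMap.range ι ≠ ⊥

section Aux

variable {R : Type u} [CommRing R] [IsLocalRing R]
variable {E : Type u} [AddCommGroup E] [Module R E]

omit [IsLocalRing R] in
/-- A retract of an injective module is injective. -/
lemma injective_of_retract (hEinj : Module.Injective R E) (s : R →ₗ[R] E) (f : E →ₗ[R] R)
    (hfs : ∀ r, f (s r) = r) : Module.Injective R R := by
  constructor
  intro X Y _ _ _ _ i hi g
  obtain ⟨h, hh⟩ := hEinj.out i hi (s ∘ₗ g)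
  refine ⟨f ∘ₗ h, fun x => ?_⟩
  simp only [LinearMap.coe_comp, Function.comp_apply, hh x]
  exact hfs (g x)

/-- If `R` is not self-injective, every map `E → R` out of an injective module has image
in the maximal ideal. -/
lemma apply_mem_max (hGor : ¬ Module.Injective R R) (hEinj : Module.Injective R E)
    (f : E →ₗ[R] R) (e : E) : f e ∈ maximalIdeal R := by
  by_contra hfe
  obtain ⟨u, hu_eq⟩ := IsLocalRing.notMem_maximalIdeal.mp hfe
  apply hGor
  apply injective_of_retract hEinj (LinearMap.toSpanSingleton R E ((↑u⁻¹ : R) • e)) f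
  intro r
  rw [LinearMap.toSpanSingleton_apply, smul_smul, map_smul, smul_eq_mul, mul_assoc, ← hu_eq,
    Units.inv_mul, mul_one]

end Aux

theorem stmt11 (R : Type u) [CommRing R] [IsArtinianRing R] [IsLocalRing R]
    (hGor : ¬ Module.Injective R R)
    (E : Type u) [AddCommGroup E] [Module R E] (ι : ResidueField R →ₗ[R] E)
    (hE : IsInjectiveEnvelopeOfResidueField R E ι) :
    (maximalIdeal R) ^ 2 = ⊥ ↔
      (maximalIdeal R ≤ ⨆ f : E →ₗ[R] R, LinearMap.range f) ∧
        (∀ r ∈ maximalIdeal R, ∀ φ : E →ₗ[R] R, r • φ = 0) := by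
  obtain ⟨hEinj, hιinj, hess⟩ := hE
  constructor
  · intro hsq
    have hmul : ∀ a ∈ maximalIdeal R, ∀ b ∈ maximalIdeal R, a * b = 0 := by
      intro a ha b hb
      have h := Ideal.mul_mem_mul ha hb
      rw [← pow_two, hsq, Ideal.mem_bot] at h
      exact h
    -- socle of E is contained in the image of ι
    have hsoc : ∀ e : E, (∀ r ∈ maximalIdeal R, r • e = 0) → e ∈ LinearMap.range ι := by
      intro e he
      by_cases h0 : e = 0
      · simp [h0]
      · have hne : Submodule.span R {e} ≠ ⊥ := by
          simpa [Submodule.span_singleton_eq_bot] using h0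
        obtain ⟨y, ⟨hy1, hy2⟩, hy0⟩ := Submodule.ne_bot_iff _ |>.mp (hess _ hne)
        obtain ⟨r, hr⟩ := Submodule.mem_span_singleton.mp hy1
        by_cases hrm : r ∈ maximalIdeal R
        · exact (hy0 (by rw [← hr]; exact he r hrm)).elim
        · obtain ⟨u, rfl⟩ := IsLocalRing.notMem_maximalIdeal.mp hrm
          have he' : e = (↑u⁻¹ : R) • y := by
            rw [← hr, smul_smul, Units.inv_mul, one_smul]
          rw [he']
          exact Submodule.smul_mem _ _ hy2
    have hmE : ∀ r ∈ maximalIdeal R, ∀ e : E, r • e ∈ LinearMap.range ι := by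
      intro r hr e
      apply hsoc
      intro s hs
      rw [smul_smul, hmul s hs r hr, zero_smul]
    have hmι : ∀ r ∈ maximalIdeal R, ∀ c : ResidueField R, r • ι c = 0 := by
      intro r hr c
      rw [← map_smul]
      have : r • c = 0 := by
        obtain ⟨s, rfl⟩ := IsLocalRing.residue_surjective c
        rw [Algebra.smul_def, IsLocalRing.ResidueField.algebraMap_eq, ← map_mul,
          IsLocalRing.residue_eq_zero_iff]
        exact Ideal.mul_mem_right s _ hr
      rw [this, map_zero]
    -- the maximal ideal is nonzero (otherwise R is a field, hence self-injective)
    have hm_ne : maximalIdeal R ≠ ⊥ := by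
      intro h0
      apply hGor
      apply Module.Baer.injective
      intro I g
      by_cases h1 : (1 : R) ∈ I
      · refine ⟨LinearMap.toSpanSingleton R R (g ⟨1, h1⟩), fun x mem => ?_⟩
        rw [LinearMap.toSpanSingleton_apply, ← map_smul]
        congr 1
        exact Subtype.ext (by simp)
      · refine ⟨0, fun x mem => ?_⟩
        have hI : I ≤ maximalIdeal R :=
          le_maximalIdeal (fun ht => h1 (ht ▸ Submodule.mem_top))
        have hx0 : x = 0 := by
          have := hI mem
          rw [h0] at this
          simpa using this
        have hx : (⟨x, mem⟩ : I) = 0 := Subtype.ext hx0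
        rw [hx, map_zero, LinearMap.zero_apply]
    obtain ⟨x, hxm, hx0⟩ := Submodule.ne_bot_iff _ |>.mp hm_ne
    -- the map k → R, c ↦ c·x
    have hker : maximalIdeal R ≤ LinearMap.ker (LinearMap.toSpanSingleton R R x) := by
      intro s hs
      rw [LinearMap.mem_ker, LinearMap.toSpanSingleton_apply, smul_eq_mul]
      exact hmul s hs x hxm
    set f₀ : ResidueField R →ₗ[R] R :=
      Submodule.liftQ (maximalIdeal R) (LinearMap.toSpanSingleton R R x) hker with hf₀
    have hf₀inj : Function.Injective f₀ := by
      rw [← LinearMap.ker_eq_bot, eq_bot_iff]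
      intro c hc
      obtain ⟨s, rfl⟩ := IsLocalRing.residue_surjective c
      have hc2 : s • x = 0 := hc
      rw [Submodule.mem_bot, IsLocalRing.residue_eq_zero_iff]
      by_contra hs
      obtain ⟨u, rfl⟩ := IsLocalRing.notMem_maximalIdeal.mp hs
      apply hx0
      calc x = (↑u⁻¹ : R) • ((↑u : R) • x) := by rw [smul_smul, Units.inv_mul, one_smul]
        _ = 0 := by rw [hc2, smul_zero]
    -- extend ι : k → E along f₀ : k → R using injectivity of E
    obtain ⟨F, hF⟩ := hEinj.out f₀ hf₀inj ι
    set e₀ := F 1 with he₀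
    have hxe₀ : x • e₀ = ι 1 := by
      have h1 := hF 1
      have h1' : f₀ (1 : ResidueField R) = x := by
        show (1 : R) • x = x
        rw [one_smul]
      rw [h1'] at h1
      have h2 : F x = x • e₀ := by rw [he₀, ← map_smul, smul_eq_mul, mul_one]
      rw [← h2, h1]
    have hι1 : ι 1 ≠ 0 := fun h =>
      one_ne_zero (hιinj (h.trans (map_zero ι).symm))
    have he₀n : e₀ ∉ LinearMap.range ι := by
      rintro ⟨c, hc⟩
      apply hι1
      rw [← hxe₀, ← hc]
      exact hmι x hxm c
    -- the quotient E / range ι is a vector space over the residue field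
    set N := LinearMap.range ι with hN
    have hTor : Module.IsTorsionBySet R (E ⧸ N) (maximalIdeal R : Set R) := by
      intro v r
      obtain ⟨e, rfl⟩ := Submodule.Quotient.mk_surjective N v
      rw [← Submodule.Quotient.mk_smul, Submodule.Quotient.mk_eq_zero]
      exact hmE r r.2 e
    letI : Module (ResidueField R) (E ⧸ N) := hTor.module
    set v₀ : E ⧸ N := Submodule.Quotient.mk e₀ with hv₀def
    have hv₀ : v₀ ≠ 0 := fun h => he₀n ((Submodule.Quotient.mk_eq_zero N).mp h)
    have hker2 : LinearMap.ker (LinearMap.toSpanSingleton (ResidueField R) (E ⧸ N) v₀) = ⊥ := by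
      rw [eq_bot_iff]
      intro c hc
      rw [LinearMap.mem_ker, LinearMap.toSpanSingleton_apply] at hc
      rw [Submodule.mem_bot]
      by_contra hc0
      apply hv₀
      calc v₀ = c⁻¹ • (c • v₀) := by rw [smul_smul, inv_mul_cancel₀ hc0, one_smul]
        _ = 0 := by rw [hc, smul_zero]
    obtain ⟨g, hg⟩ := LinearMap.exists_leftInverse_of_injective
      (LinearMap.toSpanSingleton (ResidueField R) (E ⧸ N) v₀) hker2
    have hgv₀ : g v₀ = 1 := by
      have := LinearMap.congr_fun hg 1
      simpa using this
    have hsmulV : ∀ (r : R) (v : E ⧸ N), (residue R r) • v = r • v :=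
      fun r v => hTor.mk_smul r v
    have hsmulk : ∀ (r : R) (c : ResidueField R), r • c = (residue R r) * c := by
      intro r c
      obtain ⟨s, rfl⟩ := Submodule.Quotient.mk_surjective _ c
      rfl
    set μ : E →ₗ[R] ResidueField R :=
      { toFun := fun e => g (N.mkQ e)
        map_add' := fun a b => by rw [map_add, map_add]
        map_smul' := fun r e => by
          simp only [RingHom.id_apply]
          rw [map_smul, ← hsmulV r, g.map_smul, hsmulk, smul_eq_mul] } with hμ
    have hμe₀ : μ e₀ = 1 := by
      rw [hμ]
      show g (N.mkQ e₀) = 1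
      rw [Submodule.mkQ_apply]
      exact hgv₀
    refine ⟨?_, ?_⟩
    · intro r hr
      have hker3 : maximalIdeal R ≤ LinearMap.ker (LinearMap.toSpanSingleton R R r) := by
        intro s hs
        rw [LinearMap.mem_ker, LinearMap.toSpanSingleton_apply, smul_eq_mul]
        exact hmul s hs r hr
      set fr : E →ₗ[R] R :=
        (Submodule.liftQ (maximalIdeal R) (LinearMap.toSpanSingleton R R r) hker3) ∘ₗ μ with hfr
      have hfre₀ : fr e₀ = r := by
        have hcomp : fr e₀ =
            Submodule.liftQ (maximalIdeal R) (LinearMap.toSpanSingleton R R r) hker3 (μ e₀) := rfl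
        rw [hcomp, hμe₀]
        show (1 : R) • r = r
        rw [one_smul]
      exact Submodule.mem_iSup_of_mem fr ⟨e₀, hfre₀⟩
    · intro r hr φ
      ext e
      rw [LinearMap.smul_apply, LinearMap.zero_apply, smul_eq_mul]
      exact hmul r hr (φ e) (apply_mem_max hGor hEinj φ e)
  · rintro ⟨h1, h2⟩
    rw [eq_bot_iff, pow_two, Ideal.mul_le]
    intro a ha b hb
    have hsup : (⨆ f : E →ₗ[R] R, LinearMap.range f) ≤
        LinearMap.ker (LinearMap.toSpanSingleton R R a) := by
      apply iSup_le
      intro f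
      rintro y ⟨e, rfl⟩
      rw [LinearMap.mem_ker, LinearMap.toSpanSingleton_apply, smul_eq_mul]
      have h3 := LinearMap.congr_fun (h2 a ha f) e
      rw [LinearMap.smul_apply, LinearMap.zero_apply, smul_eq_mul] at h3
      rw [mul_comm]
      exact h3
    have h4 := hsup (h1 hb)
    rw [LinearMap.mem_ker, LinearMap.toSpanSingleton_apply, smul_eq_mul] at h4
    rw [Ideal.mem_bot]
    rw [mul_comm] at h4
    exact h4
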